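/- In the constrained Gibbs-measure setting (A, H bounded measurable, λ > 0, π({H < B}) > 0, ū the optimal multiplier), the duality gap is zero: ∫ A dρ̃_{ū} + (1/λ) KL(ρ̃_{ū}‖π) = sup_{u ≥ 0} [∫ A dρ̃_u + u(∫ H dρ̃_u − B) + (1/λ) KL(ρ̃_u‖π)]. -/

import Mathlib

open MeasureTheory

/-- Kullback–Leibler divergence `∫ log(dρ/dπ) dρ` (real-valued version). -/
noncomputable def klDiv {Θ : Type*} [MeasurableSpace Θ] (ρ π : Measure Θ) : ℝ :=
  ∫ θ, Real.log ((ρ.rnDeriv π θ).toReal) ∂ρ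

/-- The Gibbs measure with density proportional to `exp (-lam * (A θ + u * H θ))`
with respect to `prior`. -/
noncomputable def gibbsMeasure {Θ : Type*} [MeasurableSpace Θ] (prior : Measure Θ)
    (lam : ℝ) (A H : Θ → ℝ) (u : ℝ) : Measure Θ :=
  prior.tilted fun θ => -(lam * (A θ + u * H θ))

/-- `Λ(u) = ∫ H dρ̃_u`. -/
noncomputable def LambdaFn {Θ : Type*} [MeasurableSpace Θ] (prior : Measure Θ)
    (lam : ℝ) (A H : Θ → ℝ) (u : ℝ) : ℝ :=
  ∫ θ, H θ ∂(gibbsMeasure prior lam A H u)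

section Aux

variable {Θ : Type*} [MeasurableSpace Θ] (prior : Measure Θ)
    [IsProbabilityMeasure prior]
    (lam : ℝ) (A H : Θ → ℝ)

/-- The tilting exponent. -/
noncomputable def fExp (u : ℝ) : Θ → ℝ := fun θ => -(lam * (A θ + u * H θ))

/-- The normalizing constant. -/
noncomputable def Zfn (u : ℝ) : ℝ := ∫ θ, Real.exp (fExp lam A H u θ) ∂prior

variable {prior lam A H}

lemma fExp_meas (hA : Measurable A) (hH : Measurable H) (u : ℝ) :
    Measurable (fExp lam A H u : Θ → ℝ) := by
  unfold fExp; fun_prop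

lemma fExp_bound {CA CH : ℝ} (hAbd : ∀ θ, |A θ| ≤ CA) (hHbd : ∀ θ, |H θ| ≤ CH) (u : ℝ)
    (θ : Θ) : |fExp lam A H u θ| ≤ |lam| * (CA + |u| * CH) := by
  unfold fExp
  rw [abs_neg, abs_mul]
  have h1 : |A θ + u * H θ| ≤ CA + |u| * CH := by
    calc |A θ + u * H θ| ≤ |A θ| + |u * H θ| := abs_add_le _ _
      _ ≤ CA + |u| * CH := by
          rw [abs_mul]
          exact add_le_add (hAbd θ) (mul_le_mul_of_nonneg_left (hHbd θ) (abs_nonneg u))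
  exact mul_le_mul_of_nonneg_left h1 (abs_nonneg lam)

lemma integrable_of_bdd {μ : Measure Θ} [IsProbabilityMeasure μ] {g : Θ → ℝ} {C : ℝ}
    (hg : Measurable g) (hC : ∀ θ, |g θ| ≤ C) : Integrable g μ := by
  refine Integrable.mono' (integrable_const C) hg.aestronglyMeasurable ?_
  exact Filter.Eventually.of_forall fun θ => hC θ

lemma integrable_exp_fExp (hA : Measurable A) (hH : Measurable H)
    {CA CH : ℝ} (hAbd : ∀ θ, |A θ| ≤ CA) (hHbd : ∀ θ, |H θ| ≤ CH) (u : ℝ) :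
    Integrable (fun θ => Real.exp (fExp lam A H u θ)) prior := by
  refine integrable_of_bdd (C := Real.exp (|lam| * (CA + |u| * CH)))
    (by have := fExp_meas (lam := lam) hA hH u; fun_prop) fun θ => ?_
  rw [abs_of_pos (Real.exp_pos _)]
  exact Real.exp_le_exp.2 ((abs_le.1 (fExp_bound hAbd hHbd u θ)).2)

lemma Zfn_pos (hA : Measurable A) (hH : Measurable H)
    {CA CH : ℝ} (hAbd : ∀ θ, |A θ| ≤ CA) (hHbd : ∀ θ, |H θ| ≤ CH) (u : ℝ) :
    0 < Zfn prior lam A H u :=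
  integral_exp_pos (integrable_exp_fExp hA hH hAbd hHbd u)

lemma gibbs_prob (hA : Measurable A) (hH : Measurable H)
    {CA CH : ℝ} (hAbd : ∀ θ, |A θ| ≤ CA) (hHbd : ∀ θ, |H θ| ≤ CH) (u : ℝ) :
    IsProbabilityMeasure (gibbsMeasure prior lam A H u) :=
  isProbabilityMeasure_tilted (integrable_exp_fExp hA hH hAbd hHbd u)

/-- Key identity: the dual objective at `u` equals `-u*B - (1/lam) * log Z(u)`. -/
lemma objective_eq (hlam : 0 < lam) (hA : Measurable A) (hH : Measurable H)
    {CA CH : ℝ} (hAbd : ∀ θ, |A θ| ≤ CA) (hHbd : ∀ θ, |H θ| ≤ CH) (B : ℝ) (u : ℝ) :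
    (∫ θ, A θ ∂(gibbsMeasure prior lam A H u))
        + u * (LambdaFn prior lam A H u - B)
        + (1 / lam) * klDiv (gibbsMeasure prior lam A H u) prior
      = -(u * B) - (1 / lam) * Real.log (Zfn prior lam A H u) := by
  have hexp := integrable_exp_fExp (prior := prior) (lam := lam) hA hH hAbd hHbd u
  have hprob := gibbs_prob (prior := prior) (lam := lam) hA hH hAbd hHbd u
  have hac : gibbsMeasure prior lam A H u ≪ prior :=
    tilted_absolutelyContinuous prior _
  -- KL formula
  have hkl : klDiv (gibbsMeasure prior lam A H u) prior
      = ∫ θ, (fExp lam A H u θ - Real.log (Zfn prior lam A H u))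
          ∂(gibbsMeasure prior lam A H u) := by
    refine integral_congr_ae ?_
    exact hac.ae_eq (log_rnDeriv_tilted_left_self hexp)
  have hintA : Integrable A (gibbsMeasure prior lam A H u) :=
    integrable_of_bdd hA hAbd
  have hintH : Integrable H (gibbsMeasure prior lam A H u) :=
    integrable_of_bdd hH hHbd
  have hintf : Integrable (fExp lam A H u) (gibbsMeasure prior lam A H u) :=
    integrable_of_bdd (fExp_meas hA hH u) (fExp_bound hAbd hHbd u)
  have hfint : ∫ θ, fExp lam A H u θ ∂(gibbsMeasure prior lam A H u)
      = -(lam * ((∫ θ, A θ ∂(gibbsMeasure prior lam A H u))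
          + u * LambdaFn prior lam A H u)) := by
    unfold fExp LambdaFn
    rw [show (fun θ => -(lam * (A θ + u * H θ)))
        = fun θ => (-lam) * A θ + (-(lam * u)) * H θ by funext θ; ring]
    rw [integral_add ((hintA.const_mul _)) ((hintH.const_mul _)),
      integral_const_mul, integral_const_mul]
    ring
  rw [hkl, integral_sub hintf (integrable_const _), integral_const]
  simp only [probReal_univ, measure_univ, ENNReal.toReal_one, one_smul, smul_eq_mul]
  rw [hfint]
  field_simp
  ring

/-- Gibbs variational inequality (Jensen). -/
lemma gibbs_jensen (hA : Measurable A) (hH : Measurable H)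
    {CA CH : ℝ} (hAbd : ∀ θ, |A θ| ≤ CA) (hHbd : ∀ θ, |H θ| ≤ CH) (u v : ℝ) :
    ∫ θ, (fExp lam A H u θ - fExp lam A H v θ) ∂(gibbsMeasure prior lam A H v)
      ≤ Real.log (Zfn prior lam A H u) - Real.log (Zfn prior lam A H v) := by
  have hZu := Zfn_pos (prior := prior) (lam := lam) hA hH hAbd hHbd u
  have hZv := Zfn_pos (prior := prior) (lam := lam) hA hH hAbd hHbd v
  have hprob := gibbs_prob (prior := prior) (lam := lam) hA hH hAbd hHbd v
  set g : Θ → ℝ := fun θ => fExp lam A H u θ - fExp lam A H v θ with hg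
  have hgmeas : Measurable g := (fExp_meas hA hH u).sub (fExp_meas hA hH v)
  have hgbd : ∀ θ, |g θ| ≤ |lam| * (CA + |u| * CH) + |lam| * (CA + |v| * CH) := by
    intro θ
    calc |g θ| ≤ |fExp lam A H u θ| + |fExp lam A H v θ| := abs_sub _ _
      _ ≤ _ := add_le_add (fExp_bound hAbd hHbd u θ) (fExp_bound hAbd hHbd v θ)
  have hgint : Integrable g (gibbsMeasure prior lam A H v) :=
    integrable_of_bdd hgmeas hgbd
  have hexpg_int : Integrable (fun θ => Real.exp (g θ)) (gibbsMeasure prior lam A H v) := by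
    refine integrable_of_bdd (C := Real.exp (|lam| * (CA + |u| * CH) + |lam| * (CA + |v| * CH)))
      (by fun_prop) fun θ => ?_
    rw [abs_of_pos (Real.exp_pos _)]
    exact Real.exp_le_exp.2 ((abs_le.1 (hgbd θ)).2)
  -- ∫ exp g d(gibbs v) = Z u / Z v
  have hint_exp : ∫ θ, Real.exp (g θ) ∂(gibbsMeasure prior lam A H v)
      = Zfn prior lam A H u / Zfn prior lam A H v := by
    have := integral_exp_tilted (μ := prior) (fExp lam A H v) g
    rw [show gibbsMeasure prior lam A H v = prior.tilted (fExp lam A H v) from rfl, this]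
    congr 1
    refine integral_congr_ae (Filter.Eventually.of_forall fun θ => ?_)
    simp only [Pi.add_apply, hg]
    ring_nf
  -- Jensen
  have hjensen : Real.exp (∫ θ, g θ ∂(gibbsMeasure prior lam A H v))
      ≤ ∫ θ, Real.exp (g θ) ∂(gibbsMeasure prior lam A H v) := by
    have := convexOn_exp.map_integral_le (μ := gibbsMeasure prior lam A H v)
      Real.continuousOn_exp isClosed_univ
      (Filter.Eventually.of_forall fun θ => Set.mem_univ (g θ)) hgint
      (by exact hexpg_int)
    exact this
  have : Real.exp (∫ θ, g θ ∂(gibbsMeasure prior lam A H v))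
      ≤ Zfn prior lam A H u / Zfn prior lam A H v := hint_exp ▸ hjensen
  have hlog := Real.log_le_log (Real.exp_pos _) this
  rwa [Real.log_exp, Real.log_div hZu.ne' hZv.ne'] at hlog

end Aux

/-- zero duality gap: with `ū` the optimal multiplier
(`ū = 0` if `Λ(0) ≤ B`, otherwise `ū > 0` with `Λ(ū) = B`),
`∫ A dρ̃_ū + (1/lam) KL(ρ̃_ū‖prior)
  = sup_{u ≥ 0} [∫ A dρ̃_u + u (Λ(u) − B) + (1/lam) KL(ρ̃_u‖prior)]`. -/
theorem stmt5 {Θ : Type*} [MeasurableSpace Θ] (prior : Measure Θ)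
    [IsProbabilityMeasure prior]
    (lam : ℝ) (hlam : 0 < lam)
    (A H : Θ → ℝ) (hA : Measurable A) (hH : Measurable H)
    (CA CH : ℝ) (hAbd : ∀ θ, |A θ| ≤ CA) (hHbd : ∀ θ, |H θ| ≤ CH)
    (B : ℝ) (hqual : 0 < prior {θ | H θ < B})
    (ubar : ℝ) (hubar0 : 0 ≤ ubar)
    (hcase1 : LambdaFn prior lam A H 0 ≤ B → ubar = 0)
    (hcase2 : B < LambdaFn prior lam A H 0 →
      0 < ubar ∧ LambdaFn prior lam A H ubar = B) :
    (∫ θ, A θ ∂(gibbsMeasure prior lam A H ubar))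
        + (1 / lam) * klDiv (gibbsMeasure prior lam A H ubar) prior
      = sSup {y : ℝ | ∃ u : ℝ, 0 ≤ u ∧
          y = (∫ θ, A θ ∂(gibbsMeasure prior lam A H u))
              + u * (LambdaFn prior lam A H u - B)
              + (1 / lam) * klDiv (gibbsMeasure prior lam A H u) prior} := by
  set G : ℝ → ℝ := fun u =>
    (∫ θ, A θ ∂(gibbsMeasure prior lam A H u))
      + u * (LambdaFn prior lam A H u - B)
      + (1 / lam) * klDiv (gibbsMeasure prior lam A H u) prior with hG
  have hGeq : ∀ u, G u = -(u * B) - (1 / lam) * Real.log (Zfn prior lam A H u) :=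
    fun u => objective_eq hlam hA hH hAbd hHbd B u
  -- ubar * (Λ(ubar) - B) = 0
  have hslack : ubar * (LambdaFn prior lam A H ubar - B) = 0 := by
    rcases le_or_gt (LambdaFn prior lam A H 0) B with h | h
    · rw [hcase1 h]; ring
    · rw [(hcase2 h).2]; ring
  have hLHS : (∫ θ, A θ ∂(gibbsMeasure prior lam A H ubar))
      + (1 / lam) * klDiv (gibbsMeasure prior lam A H ubar) prior = G ubar := by
    rw [hG]; simp only []; rw [hslack]; ring
  -- G u ≤ G ubar for all u ≥ 0
  have hmax : ∀ u : ℝ, 0 ≤ u → G u ≤ G ubar := by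
    intro u hu
    rw [hGeq u, hGeq ubar]
    -- Jensen: ∫ (f u - f ubar) d(gibbs ubar) ≤ log Z u - log Z ubar
    have hj := gibbs_jensen (prior := prior) (lam := lam) hA hH hAbd hHbd u ubar
    have hfd : ∫ θ, (fExp lam A H u θ - fExp lam A H ubar θ)
        ∂(gibbsMeasure prior lam A H ubar)
        = -(lam * (u - ubar)) * LambdaFn prior lam A H ubar := by
      have : (fun θ => fExp lam A H u θ - fExp lam A H ubar θ)
          = fun θ => (-(lam * (u - ubar))) * H θ := by
        funext θ; unfold fExp; ring
      rw [this, integral_const_mul]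
      rfl
    rw [hfd] at hj
    -- so -(1/lam)(log Z u - log Z ubar) ≤ (u - ubar) * Λ(ubar)
    have hkey : -((1 / lam) * (Real.log (Zfn prior lam A H u)
        - Real.log (Zfn prior lam A H ubar))) ≤ (u - ubar) * LambdaFn prior lam A H ubar := by
      have h1 : -((u - ubar) * LambdaFn prior lam A H ubar)
          ≤ (1 / lam) * (Real.log (Zfn prior lam A H u)
            - Real.log (Zfn prior lam A H ubar)) := by
        have := mul_le_mul_of_nonneg_left hj (le_of_lt (one_div_pos.2 hlam))
        calc -((u - ubar) * LambdaFn prior lam A H ubar)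
            = (1 / lam) * (-(lam * (u - ubar)) * LambdaFn prior lam A H ubar) := by
              field_simp
          _ ≤ _ := this
      linarith
    -- conclude using sign of (u - ubar)(B - Λ(ubar))
    have hsign : (u - ubar) * (LambdaFn prior lam A H ubar - B) ≤ 0 := by
      rcases le_or_gt (LambdaFn prior lam A H 0) B with h | h
      · have h0 : ubar = 0 := hcase1 h
        subst h0
        have : LambdaFn prior lam A H 0 - B ≤ 0 := by linarith
        simpa using mul_nonpos_of_nonneg_of_nonpos (by simpa using hu) this
      · rw [(hcase2 h).2]; simp
    nlinarith [hkey, hsign]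
  -- conclude
  rw [hLHS]
  have hmem : G ubar ∈ {y : ℝ | ∃ u : ℝ, 0 ≤ u ∧
      y = (∫ θ, A θ ∂(gibbsMeasure prior lam A H u))
          + u * (LambdaFn prior lam A H u - B)
          + (1 / lam) * klDiv (gibbsMeasure prior lam A H u) prior} :=
    ⟨ubar, hubar0, rfl⟩
  refine le_antisymm (le_csSup ⟨G ubar, ?_⟩ hmem) (csSup_le ⟨G ubar, hmem⟩ ?_)
  · rintro y ⟨u, hu, rfl⟩
    exact hmax u hu
  · rintro y ⟨u, hu, rfl⟩
    exact hmax u hu
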